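/- Let d ≥ 2, r > 0, δ > 0, and let A = {x_1, …, x_N} be a nonempty finite set of points in ℝ^d. Then λ(A_{⊕(r+δ)} \ A_{⊕r}) ≤ N_B(A; r) · 2^{d−1} ω_d ((r+δ)^d − r^d), where N_B(A; r) is the r-packing number of A with respect to the ℓ² metric. -/

import Mathlib

open MeasureTheory Set Filter
open scoped ENNReal Pointwise

/-- The closed unit Euclidean ball in `ℝ^d`. -/
noncomputable def unitBall (d : ℕ) : Set (EuclideanSpace ℝ (Fin d)) := Metric.closedBall 0 1

/-- `ω_d = π^{d/2}/Γ(1+d/2)`, the volume of the unit Euclidean ball in `ℝ^d`. -/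
noncomputable def omegaVol (d : ℕ) : ℝ := Real.pi ^ ((d : ℝ) / 2) / Real.Gamma (1 + (d : ℝ) / 2)

/-- The `ε`-packing number of `A` with respect to the metric `dist'`: the maximal
cardinality of a subset of `A` whose points have pairwise distances `> ε`. -/
noncomputable def packingNum {d : ℕ}
    (dist' : EuclideanSpace ℝ (Fin d) → EuclideanSpace ℝ (Fin d) → ℝ)
    (A : Set (EuclideanSpace ℝ (Fin d))) (ε : ℝ) : ℕ :=
  sSup {n : ℕ | ∃ S : Finset (EuclideanSpace ℝ (Fin d)), ↑S ⊆ A ∧ S.card = n ∧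
    ∀ x ∈ S, ∀ y ∈ S, x ≠ y → ε < dist' x y}

lemma pow_sub_le_add_pow_sub (n : ℕ) {a b u : ℝ} (ha : 0 ≤ a) (hab : a ≤ b) (hu : 0 ≤ u) :
    b ^ n - a ^ n ≤ (b + u) ^ n - (a + u) ^ n := by
  have h1 : (b + u) ^ n - (a + u) ^ n
      = ∑ k ∈ Finset.range (n + 1), (b ^ k - a ^ k) * u ^ (n - k) * (n.choose k : ℝ) := by
    rw [add_pow, add_pow, ← Finset.sum_sub_distrib]
    congr 1; funext k; ring
  have h2 : b ^ n - a ^ n = (b ^ n - a ^ n) * u ^ (n - n) * (n.choose n : ℝ) := by simp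
  rw [h1, h2]
  exact Finset.single_le_sum
    (f := fun k => (b ^ k - a ^ k) * u ^ (n - k) * (n.choose k : ℝ))
    (fun k _ => mul_nonneg (mul_nonneg (sub_nonneg.2 (pow_le_pow_left₀ ha hab k))
      (pow_nonneg hu _)) (Nat.cast_nonneg _))
    (Finset.self_mem_range_succ n)

lemma add_pow_le_two_pow_mul {a b : ℝ} (ha : 0 ≤ a) (hb : 0 ≤ b) {n : ℕ} (hn : 1 ≤ n) :
    (a + b) ^ n ≤ 2 ^ (n - 1) * (a ^ n + b ^ n) := by
  obtain ⟨m, rfl⟩ : ∃ m, n = m + 1 := ⟨n - 1, (Nat.succ_pred_eq_of_pos hn).symm⟩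
  have h := (convexOn_pow (m + 1)).2 (mem_Ici.2 ha) (mem_Ici.2 hb)
    (by norm_num : (0:ℝ) ≤ 1/2) (by norm_num : (0:ℝ) ≤ 1/2) (by norm_num)
  simp only [smul_eq_mul] at h
  have h2 : (1/2 : ℝ) * a + (1/2 : ℝ) * b = (a + b) / 2 := by ring
  rw [h2, div_pow] at h
  have h3 : (0:ℝ) < 2 ^ (m + 1) := by positivity
  rw [div_le_iff₀ h3] at h
  calc (a + b) ^ (m + 1) ≤ (1/2 * a ^ (m+1) + 1/2 * b ^ (m+1)) * 2 ^ (m+1) := h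
    _ = 2 ^ (m + 1 - 1) * (a ^ (m+1) + b ^ (m+1)) := by
        simp only [Nat.add_sub_cancel]; ring

lemma rpow_sub_slope_mono {u v s e : ℝ} (hu : 0 ≤ u) (huv : u ≤ v) (hs : 0 ≤ s) (he : 1 ≤ e) :
    (u + s) ^ e - u ^ e ≤ (v + s) ^ e - v ^ e := by
  rcases eq_or_lt_of_le (by linarith : (0:ℝ) ≤ v + s - u) with hD | hD
  · have hvu : v = u := by nlinarith
    have hs0 : s = 0 := by nlinarith
    simp [hvu, hs0]
  · set D := v + s - u with hDdef
    have hDne : D ≠ 0 := ne_of_gt hD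
    set t := s / D with htdef
    have ht0 : 0 ≤ t := div_nonneg hs hD.le
    have ht1 : t ≤ 1 := by
      rw [htdef, div_le_one hD]; linarith
    have h1t : 0 ≤ 1 - t := by linarith
    have cx := convexOn_rpow he
    have hvs : (0:ℝ) ≤ v + s := by linarith
    have hsD : t * D = s := by rw [htdef]; field_simp
    have key1 : (1 - t) * u + t * (v + s) = u + s := by
      have : (1 - t) * u + t * (v + s) = u + t * D := by rw [hDdef]; ring
      rw [this, hsD]
    have key2 : t * u + (1 - t) * (v + s) = v := by
      have : t * u + (1 - t) * (v + s) = (v + s) - t * D := by rw [hDdef]; ring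
      rw [this, hsD]; ring
    have h1 := cx.2 (mem_Ici.2 hu) (mem_Ici.2 hvs) h1t ht0 (by ring)
    have h2 := cx.2 (mem_Ici.2 hu) (mem_Ici.2 hvs) ht0 h1t (by ring)
    simp only [smul_eq_mul] at h1 h2
    rw [key1] at h1
    rw [key2] at h2
    linarith

lemma key_scalar {d : ℕ} (hd : 2 ≤ d) {r δ ρ1 ρ2 α γ h : ℝ}
    (hr : 0 < r) (hδ : 0 < δ) (hρ1 : 0 ≤ ρ1) (hρ12 : ρ1 ≤ ρ2)
    (hγ : 0 ≤ γ) (hγr : γ ≤ r) (hh : 0 ≤ h) (hsq : h ^ 2 = γ ^ 2 + ((r + δ) ^ 2 - r ^ 2))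
    (hαγ : -γ ≤ α) (hαγ' : α ≤ γ) (h1 : α + γ ≤ ρ1) (h2 : ρ2 ≤ α + h) :
    ρ2 ^ d - ρ1 ^ d ≤ 2 ^ (d - 1) * ((r + δ) ^ d - r ^ d) := by
  have hγh : γ ≤ h := by nlinarith
  have hαh : 0 ≤ α + h := by linarith
  have hαγ0 : 0 ≤ α + γ := by linarith
  -- step 1
  have s1 : ρ2 ^ d - ρ1 ^ d ≤ (α + h) ^ d - (α + γ) ^ d := by
    have e1 : ρ2 ^ d ≤ (α + h) ^ d := pow_le_pow_left₀ (by linarith) h2 d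
    have e2 : (α + γ) ^ d ≤ ρ1 ^ d := pow_le_pow_left₀ hαγ0 h1 d
    linarith
  -- step 2
  have s2 : (α + h) ^ d - (α + γ) ^ d ≤ (γ + h) ^ d - (γ + γ) ^ d := by
    have := pow_sub_le_add_pow_sub d (a := α + γ) (b := α + h) (u := γ - α) hαγ0 (by linarith) (by linarith)
    calc (α + h) ^ d - (α + γ) ^ d ≤ (α + h + (γ - α)) ^ d - (α + γ + (γ - α)) ^ d := this
      _ = (γ + h) ^ d - (γ + γ) ^ d := by ring_nf
  -- step 3
  have s3 : (γ + h) ^ d - (γ + γ) ^ d ≤ 2 ^ (d - 1) * (h ^ d - γ ^ d) := by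
    have hpm : (γ + h) ^ d ≤ 2 ^ (d - 1) * (γ ^ d + h ^ d) :=
      add_pow_le_two_pow_mul hγ hh (by omega)
    have h2d : ((γ + γ) : ℝ) ^ d = 2 ^ d * γ ^ d := by
      rw [show γ + γ = 2 * γ by ring, mul_pow]
    have h2d' : (2:ℝ) ^ d = 2 * 2 ^ (d - 1) := by
      rw [← pow_succ']
      congr 1
      omega
    rw [h2d, h2d']
    nlinarith [pow_nonneg hγ d]
  -- step 4
  have s4 : h ^ d - γ ^ d ≤ (r + δ) ^ d - r ^ d := by
    have he : (1:ℝ) ≤ (d:ℝ) / 2 := by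
      have : (2:ℝ) ≤ (d:ℝ) := by exact_mod_cast hd
      linarith
    have hmono := rpow_sub_slope_mono (u := γ ^ 2) (v := r ^ 2)
      (s := (r + δ) ^ 2 - r ^ 2) (e := (d:ℝ)/2)
      (by positivity) (by nlinarith) (by nlinarith) he
    have conv : ∀ x : ℝ, 0 ≤ x → (x ^ 2) ^ ((d:ℝ)/2) = x ^ d := by
      intro x hx
      rw [← Real.rpow_natCast x 2, ← Real.rpow_mul hx,
        show ((2:ℕ):ℝ) * ((d:ℝ)/2) = ((d:ℕ):ℝ) by push_cast; ring, Real.rpow_natCast]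
    have e1 : (γ ^ 2 + ((r + δ) ^ 2 - r ^ 2)) ^ ((d:ℝ)/2) = h ^ d := by
      rw [← hsq, conv h hh]
    have e2 : (r ^ 2 + ((r + δ) ^ 2 - r ^ 2)) ^ ((d:ℝ)/2) = (r + δ) ^ d := by
      rw [show r ^ 2 + ((r + δ) ^ 2 - r ^ 2) = (r + δ) ^ 2 by ring, conv (r + δ) (by linarith)]
    rw [e1, e2, conv γ hγ, conv r hr.le] at hmono
    exact hmono
  have h2pos : (0:ℝ) ≤ 2 ^ (d - 1) := by positivity
  nlinarith [s1, s2, s3, s4]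


lemma omegaVol_eq (d : ℕ) :
    omegaVol d = Real.sqrt Real.pi ^ d / Real.Gamma ((d : ℝ) / 2 + 1) := by
  rw [omegaVol, add_comm]
  congr 1
  rw [Real.sqrt_eq_rpow, ← Real.rpow_natCast (Real.pi ^ ((1:ℝ)/2)) d,
    ← Real.rpow_mul Real.pi_pos.le]
  congr 1
  ring

lemma omegaVol_nonneg (d : ℕ) : 0 ≤ omegaVol d := by
  rw [omegaVol]
  have h1 : 0 < Real.Gamma (1 + (d : ℝ) / 2) :=
    Real.Gamma_pos_of_pos (by positivity)
  have h2 : 0 ≤ Real.pi ^ ((d : ℝ) / 2) := Real.rpow_nonneg Real.pi_pos.le _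
  positivity

lemma volumeIoiPow_preimage_Ioc (n : ℕ) {ρ1 ρ2 : ℝ} (h1 : 0 ≤ ρ1) (h12 : ρ1 ≤ ρ2) :
    Measure.volumeIoiPow n ((Subtype.val) ⁻¹' (Ioc ρ1 ρ2) : Set (Ioi (0:ℝ)))
      = ENNReal.ofReal ((ρ2 ^ (n+1) - ρ1 ^ (n+1)) / (n+1)) := by
  have hmeas : MeasurableSet ((Subtype.val) ⁻¹' (Ioc ρ1 ρ2) : Set (Ioi (0:ℝ))) :=
    measurableSet_Ioc.preimage measurable_subtype_coe
  rw [Measure.volumeIoiPow, withDensity_apply _ hmeas,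
    setLIntegral_subtype measurableSet_Ioi _ (fun a : ℝ => ENNReal.ofReal (a ^ n)),
    Subtype.image_preimage_coe]
  have hinter : Ioi (0:ℝ) ∩ Ioc ρ1 ρ2 = Ioc ρ1 ρ2 := by
    apply inter_eq_self_of_subset_right
    intro x hx
    exact lt_of_le_of_lt h1 hx.1
  rw [hinter, ← ofReal_integral_eq_lintegral_ofReal ((intervalIntegral.intervalIntegrable_pow n).1)]
  · rw [← intervalIntegral.integral_of_le h12, integral_pow]
  · filter_upwards [ae_restrict_mem measurableSet_Ioc] with y hy
    exact pow_nonneg (le_trans h1 hy.1.le) n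


section Part2

lemma sq_le_imp {x y : ℝ} (hx : 0 ≤ x) (hy : 0 ≤ y) (h : x ^ 2 ≤ y ^ 2) : x ≤ y := by
  nlinarith [sq_nonneg (x - y), sq_nonneg (x + y)]

lemma mem_add_closedBall_iff {E : Type*} [SeminormedAddCommGroup E] {K : Set E} {y : E} {t : ℝ} :
    y ∈ K + Metric.closedBall 0 t ↔ ∃ a ∈ K, ‖y - a‖ ≤ t := by
  constructor
  · rintro ⟨a, ha, b, hb, rfl⟩
    exact ⟨a, ha, by simpa [add_sub_cancel_left] using mem_closedBall_zero_iff.1 hb⟩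
  · rintro ⟨a, ha, hb⟩
    refine ⟨a, ha, y - a, mem_closedBall_zero_iff.2 hb, ?_⟩
    show a + (y - a) = y
    rw [add_comm, sub_add_cancel]

lemma isClosed_add_closedBall {E : Type*} [NormedAddCommGroup E] {K : Set E}
    (hK : K.Finite) (t : ℝ) : IsClosed (K + Metric.closedBall 0 t) := by
  have h : K + Metric.closedBall 0 t = ⋃ a ∈ K, Metric.closedBall a t := by
    ext y
    simp only [mem_add_closedBall_iff, mem_iUnion, Metric.mem_closedBall, dist_eq_norm,
      exists_prop]
  rw [h]
  exact hK.isClosed_biUnion fun a _ => Metric.isClosed_closedBall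

variable {d : ℕ}

/-- The radial slice set. -/
def Mset (K : Set (EuclideanSpace ℝ (Fin d))) (θ : EuclideanSpace ℝ (Fin d)) (t : ℝ) : Set ℝ :=
  {s : ℝ | 0 ≤ s ∧ ∃ a ∈ K, ‖s • θ - a‖ ≤ t}

lemma isClosed_Mset {K : Set (EuclideanSpace ℝ (Fin d))} (hKfin : K.Finite)
    (θ : EuclideanSpace ℝ (Fin d)) (t : ℝ) : IsClosed (Mset K θ t) := by
  have h : Mset K θ t = ⋃ a ∈ K, {s : ℝ | 0 ≤ s ∧ ‖s • θ - a‖ ≤ t} := by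
    ext s
    simp only [Mset, mem_setOf_eq, mem_iUnion, exists_prop]
    tauto
  rw [h]
  refine hKfin.isClosed_biUnion fun a _ => ?_
  have hcont : Continuous fun s : ℝ => ‖s • θ - a‖ :=
    ((continuous_id.smul continuous_const).sub continuous_const).norm
  exact (isClosed_Ici.preimage continuous_id).inter (isClosed_Iic.preimage hcont)

lemma bddAbove_Mset {K : Set (EuclideanSpace ℝ (Fin d))} {r : ℝ}
    (hKsub : K ⊆ Metric.closedBall 0 r) {θ : EuclideanSpace ℝ (Fin d)} (hθ : ‖θ‖ = 1)
    (t : ℝ) : BddAbove (Mset K θ t) := by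
  refine ⟨t + r, fun s hs => ?_⟩
  obtain ⟨hs0, a, haK, ha⟩ := hs
  have h2 := norm_add_le (s • θ - a) a
  rw [sub_add_cancel] at h2
  have h3 : ‖s • θ‖ = s := by
    rw [norm_smul, hθ, mul_one, Real.norm_eq_abs, abs_of_nonneg hs0]
  have h4 : ‖a‖ ≤ r := mem_closedBall_zero_iff.1 (hKsub haK)
  calc s = ‖s • θ‖ := h3.symm
    _ ≤ ‖s • θ - a‖ + ‖a‖ := h2
    _ ≤ t + r := add_le_add ha h4

lemma zero_mem_Mset {K : Set (EuclideanSpace ℝ (Fin d))} {r : ℝ} (hKne : K.Nonempty)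
    (hKsub : K ⊆ Metric.closedBall 0 r) (θ : EuclideanSpace ℝ (Fin d)) {t : ℝ} (ht : r ≤ t) :
    (0:ℝ) ∈ Mset K θ t := by
  obtain ⟨a0, ha0⟩ := hKne
  refine ⟨le_refl 0, a0, ha0, ?_⟩
  simpa using (mem_closedBall_zero_iff.1 (hKsub ha0)).trans ht

lemma section_exists (hd : 2 ≤ d) {r δ : ℝ} (hr : 0 < r) (hδ : 0 < δ)
    {K : Set (EuclideanSpace ℝ (Fin d))} (hKfin : K.Finite) (hKne : K.Nonempty)
    (hKsub : K ⊆ Metric.closedBall 0 r) (θ : EuclideanSpace ℝ (Fin d)) (hθ : ‖θ‖ = 1) :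
    ∃ ρ1 ρ2 : ℝ, 0 ≤ ρ1 ∧ ρ1 ≤ ρ2 ∧
      (∀ s : ℝ, 0 < s →
        s • θ ∈ (K + Metric.closedBall 0 (r + δ)) \ (K + Metric.closedBall 0 r) →
        s ∈ Ioc ρ1 ρ2) ∧
      ρ2 ^ d - ρ1 ^ d ≤ 2 ^ (d - 1) * ((r + δ) ^ d - r ^ d) := by
  classical
  have hKnorm : ∀ a ∈ K, ‖a‖ ≤ r := fun a ha => mem_closedBall_zero_iff.1 (hKsub ha)
  have hrδ : (0:ℝ) ≤ r + δ := by linarith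
  set ρ1 := sSup (Mset K θ r) with hρ1def
  set ρ2 := sSup (Mset K θ (r + δ)) with hρ2def
  have hρ1mem : ρ1 ∈ Mset K θ r :=
    (isClosed_Mset hKfin θ r).csSup_mem ⟨0, zero_mem_Mset hKne hKsub θ le_rfl⟩
      (bddAbove_Mset hKsub hθ r)
  have hρ2mem : ρ2 ∈ Mset K θ (r + δ) :=
    (isClosed_Mset hKfin θ _).csSup_mem ⟨0, zero_mem_Mset hKne hKsub θ (by linarith)⟩
      (bddAbove_Mset hKsub hθ _)
  have hρ1nn : 0 ≤ ρ1 := hρ1mem.1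
  have hρ2nn : 0 ≤ ρ2 := hρ2mem.1
  have hρ12 : ρ1 ≤ ρ2 := by
    apply csSup_le_csSup (bddAbove_Mset hKsub hθ _) ⟨0, zero_mem_Mset hKne hKsub θ le_rfl⟩
    rintro s ⟨hs0, a, haK, ha⟩
    exact ⟨hs0, a, haK, ha.trans (by linarith)⟩
  have hstar : ∀ s : ℝ, 0 ≤ s → s ≤ ρ1 → s ∈ Mset K θ r := by
    intro s hs0 hs1
    obtain ⟨_, a, haK, ha⟩ := hρ1mem
    refine ⟨hs0, a, haK, ?_⟩
    rcases eq_or_lt_of_le hρ1nn with h0 | h0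
    · have hs' : s = 0 := le_antisymm (hs1.trans h0.symm.le) hs0
      rw [hs']
      simpa using hKnorm a haK
    · have hc0 : 0 ≤ s / ρ1 := div_nonneg hs0 h0.le
      have hc1 : s / ρ1 ≤ 1 := div_le_one_of_le₀ hs1 h0.le
      have hcρ : (s / ρ1) * ρ1 = s := div_mul_cancel₀ s h0.ne'
      have hkey : s • θ - a = (s / ρ1) • (ρ1 • θ - a) + (1 - s / ρ1) • (-a) := by
        have e1 : (s / ρ1) • (ρ1 • θ - a) = s • θ - (s / ρ1) • a := by
          rw [smul_sub, smul_smul, hcρ]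
        have e2 : (1 - s / ρ1) • (-a : EuclideanSpace ℝ (Fin d)) = (s / ρ1) • a - a := by
          rw [sub_smul, one_smul, smul_neg]
          abel
        rw [e1, e2]
        abel
      calc ‖s • θ - a‖ = ‖(s / ρ1) • (ρ1 • θ - a) + (1 - s / ρ1) • (-a)‖ := by rw [hkey]
        _ ≤ ‖(s / ρ1) • (ρ1 • θ - a)‖ + ‖(1 - s / ρ1) • (-a)‖ := norm_add_le _ _
        _ = (s / ρ1) * ‖ρ1 • θ - a‖ + (1 - s / ρ1) * ‖a‖ := by
            rw [norm_smul, norm_smul, norm_neg, Real.norm_eq_abs, Real.norm_eq_abs,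
              abs_of_nonneg hc0, abs_of_nonneg (by linarith)]
        _ ≤ (s / ρ1) * r + (1 - s / ρ1) * r :=
            add_le_add (mul_le_mul_of_nonneg_left ha hc0)
              (mul_le_mul_of_nonneg_left (hKnorm a haK) (by linarith))
        _ = r := by ring
  have hsect : ∀ s : ℝ, 0 < s →
      s • θ ∈ (K + Metric.closedBall 0 (r + δ)) \ (K + Metric.closedBall 0 r) →
      s ∈ Ioc ρ1 ρ2 := by
    intro s hs hmem
    obtain ⟨hin, hout⟩ := hmem
    obtain ⟨a, haK, ha⟩ := mem_add_closedBall_iff.1 hin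
    have hup : s ≤ ρ2 := le_csSup (bddAbove_Mset hKsub hθ _) ⟨hs.le, a, haK, ha⟩
    have hlow : ρ1 < s := by
      by_contra hcon
      push_neg at hcon
      obtain ⟨_, a', ha'K, ha'⟩ := hstar s hs.le hcon
      exact hout (mem_add_closedBall_iff.2 ⟨a', ha'K, ha'⟩)
    exact ⟨hlow, hup⟩
  refine ⟨ρ1, ρ2, hρ1nn, hρ12, hsect, ?_⟩
  rcases eq_or_lt_of_le hρ12 with heq | hρlt
  · rw [heq]
    have h1 : r ^ d ≤ (r + δ) ^ d := pow_le_pow_left₀ hr.le (by linarith) d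
    have h2 : (0:ℝ) ≤ 2 ^ (d - 1) := by positivity
    nlinarith
  · obtain ⟨_, a, haK, ha⟩ := hρ2mem
    set α := (inner ℝ θ a : ℝ) with hα
    have hanorm : ‖a‖ ≤ r := hKnorm a haK
    have habs : |α| ≤ ‖a‖ := by
      have h := abs_real_inner_le_norm θ a
      rwa [hθ, one_mul] at h
    set β2 := ‖a‖ ^ 2 - α ^ 2 with hβ2
    have hβ2nn : 0 ≤ β2 := by
      have h : α ^ 2 ≤ ‖a‖ ^ 2 := by
        rw [← sq_abs]
        exact pow_le_pow_left₀ (abs_nonneg α) habs 2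
      simp only [hβ2]
      linarith
    have hβ2r : β2 ≤ r ^ 2 := by
      have h1 : ‖a‖ ^ 2 ≤ r ^ 2 := pow_le_pow_left₀ (norm_nonneg a) hanorm 2
      have h2 : 0 ≤ α ^ 2 := sq_nonneg α
      simp only [hβ2]
      linarith
    have hnorm : ∀ s : ℝ, ‖s • θ - a‖ ^ 2 = (s - α) ^ 2 + β2 := by
      intro s
      rw [norm_sub_sq_real, real_inner_smul_left]
      have hnsθ : ‖s • θ‖ ^ 2 = s ^ 2 := by
        rw [norm_smul, hθ, mul_one, Real.norm_eq_abs, sq_abs]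
      rw [hnsθ, hβ2, hα]
      ring
    set γ := Real.sqrt (r ^ 2 - β2) with hγ
    have hγnn : 0 ≤ γ := Real.sqrt_nonneg _
    have hγsq : γ ^ 2 = r ^ 2 - β2 := Real.sq_sqrt (by linarith)
    have hγr : γ ≤ r := sq_le_imp hγnn hr.le (by rw [hγsq]; linarith)
    set h := Real.sqrt ((r + δ) ^ 2 - β2) with hh
    have hhnn : 0 ≤ h := Real.sqrt_nonneg _
    have hrδsq : r ^ 2 ≤ (r + δ) ^ 2 := by nlinarith
    have hhsq : h ^ 2 = (r + δ) ^ 2 - β2 := Real.sq_sqrt (by linarith)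
    have hsq : h ^ 2 = γ ^ 2 + ((r + δ) ^ 2 - r ^ 2) := by rw [hhsq, hγsq]; ring
    have hαabs : |α| ≤ γ := by
      apply sq_le_imp (abs_nonneg α) hγnn
      rw [sq_abs, hγsq]
      have h : ‖a‖ ^ 2 ≤ r ^ 2 := pow_le_pow_left₀ (norm_nonneg a) hanorm 2
      simp only [hβ2]
      linarith
    have hαγ' : α ≤ γ := le_trans (le_abs_self α) hαabs
    have hαγ : -γ ≤ α := neg_le_of_abs_le hαabs
    have hαρ1 : α ≤ ρ1 := by
      rcases le_or_gt α 0 with hneg | hpos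
      · linarith
      · apply le_csSup (bddAbove_Mset hKsub hθ _)
        refine ⟨hpos.le, a, haK, ?_⟩
        apply sq_le_imp (norm_nonneg _) hr.le
        rw [hnorm α]
        simp only [sub_self]
        nlinarith
    have hF4 : α + γ ≤ ρ1 := by
      have hkey : γ ^ 2 ≤ (ρ1 - α) ^ 2 := by
        by_contra hcon
        push_neg at hcon
        rw [hγsq] at hcon
        set B := ρ2 + ρ1 + 2 * γ + 1 with hB
        have hBpos : 0 < B := by linarith
        set ε := (r ^ 2 - ((ρ1 - α) ^ 2 + β2)) / B with hεdef
        have hεpos : 0 < ε := div_pos (by linarith) hBpos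
        have hεB : ε * B = r ^ 2 - ((ρ1 - α) ^ 2 + β2) := div_mul_cancel₀ _ hBpos.ne'
        set s := min ρ2 (ρ1 + ε) with hsdef
        have hs1 : ρ1 < s := lt_min hρlt (by linarith)
        have hs2 : s ≤ ρ2 := min_le_left _ _
        have hsρε : s ≤ ρ1 + ε := min_le_right _ _
        have hsnn : 0 ≤ s := le_trans hρ1nn hs1.le
        have hq : (s - α) ^ 2 + β2 ≤ r ^ 2 := by
          have expand : (s - α) ^ 2 = (ρ1 - α) ^ 2 + (s - ρ1) * (s + ρ1 - 2 * α) := by ring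
          have hfac2 : 0 ≤ s + ρ1 - 2 * α := by linarith
          have hfacB : s + ρ1 - 2 * α ≤ B := by
            have h2γ : -(2 * α) ≤ 2 * γ := by linarith
            simp only [hB]
            linarith
          have hmul : (s - ρ1) * (s + ρ1 - 2 * α) ≤ ε * B :=
            mul_le_mul (by linarith) hfacB hfac2 hεpos.le
          linarith [expand, hmul, hεB]
        have hsM : s ∈ Mset K θ r := by
          refine ⟨hsnn, a, haK, ?_⟩
          apply sq_le_imp (norm_nonneg _) hr.le
          rw [hnorm s]
          linarith
        have := le_csSup (bddAbove_Mset hKsub hθ _) hsM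
        linarith
      have h5 : γ ≤ ρ1 - α := sq_le_imp hγnn (by linarith) hkey
      linarith
    have hF5 : ρ2 ≤ α + h := by
      rcases le_or_gt (ρ2 - α) 0 with hneg | hpos
      · linarith
      · have hsq2 : (ρ2 - α) ^ 2 ≤ h ^ 2 := by
          rw [hhsq]
          have h1 : ‖ρ2 • θ - a‖ ^ 2 ≤ (r + δ) ^ 2 :=
            pow_le_pow_left₀ (norm_nonneg _) ha 2
          rw [hnorm ρ2] at h1
          linarith
        have h6 := sq_le_imp hpos.le hhnn hsq2
        linarith
    exact key_scalar hd hr hδ hρ1nn hρ12 hγnn hγr hhnn hsq hαγ hαγ' hF4 hF5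

end Part2


set_option maxHeartbeats 1000000 in
lemma cluster_bound {d : ℕ} (hd : 2 ≤ d) {r δ : ℝ} (hr : 0 < r) (hδ : 0 < δ)
    {K : Set (EuclideanSpace ℝ (Fin d))} (hKfin : K.Finite) (hKne : K.Nonempty)
    (hKsub : K ⊆ Metric.closedBall 0 r) :
    volume ((K + Metric.closedBall 0 (r + δ)) \ (K + Metric.closedBall 0 r)) ≤
      ENNReal.ofReal (2 ^ (d - 1) * omegaVol d * ((r + δ) ^ d - r ^ d)) := by
  classical
  have hd0 : 0 < d := by omega
  haveI : Nonempty (Fin d) := ⟨⟨0, hd0⟩⟩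
  set T := (K + Metric.closedBall 0 (r + δ)) \ (K + Metric.closedBall 0 r) with hTdef
  have hTmeas : MeasurableSet T :=
    ((isClosed_add_closedBall hKfin _).measurableSet).diff
      (isClosed_add_closedBall hKfin _).measurableSet
  obtain ⟨a0, ha0⟩ := hKne
  have h0T : (0 : EuclideanSpace ℝ (Fin d)) ∉ T := by
    intro h0
    refine h0.2 (mem_add_closedBall_iff.2 ⟨a0, ha0, ?_⟩)
    simpa using mem_closedBall_zero_iff.1 (hKsub ha0)
  have hTsub : T ⊆ ({0}ᶜ : Set (EuclideanSpace ℝ (Fin d))) := by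
    intro y hy
    simp only [mem_compl_iff, mem_singleton_iff]
    rintro rfl
    exact h0T hy
  set f := homeomorphUnitSphereProd (EuclideanSpace ℝ (Fin d)) with hf
  set Tsub : Set ({0}ᶜ : Set (EuclideanSpace ℝ (Fin d))) := (Subtype.val) ⁻¹' T with hTsubdef
  have hTsubMeas : MeasurableSet Tsub := hTmeas.preimage measurable_subtype_coe
  set S := f '' Tsub with hSdef
  have hSmeas : MeasurableSet S :=
    (f.measurableEmbedding).measurableSet_image.2 hTsubMeas
  have step1 : volume T
      = (Measure.comap (Subtype.val) (volume : Measure (EuclideanSpace ℝ (Fin d)))) Tsub := by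
    rw [comap_subtype_coe_apply (measurableSet_singleton 0).compl, Subtype.image_preimage_coe]
    congr 1
    exact (inter_eq_self_of_subset_right hTsub).symm
  have step2 : (Measure.comap (Subtype.val) (volume : Measure (EuclideanSpace ℝ (Fin d)))) Tsub
      = ((volume : Measure (EuclideanSpace ℝ (Fin d))).toSphere.prod
          (Measure.volumeIoiPow (Module.finrank ℝ (EuclideanSpace ℝ (Fin d)) - 1))) S := by
    have hpre : Tsub = f ⁻¹' S := by rw [hSdef, f.preimage_image]
    rw [hpre]
    exact ((volume : Measure (EuclideanSpace ℝ (Fin d))).measurePreserving_homeomorphUnitSphereProd).measure_preimage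
      hSmeas.nullMeasurableSet
  have hfr : Module.finrank ℝ (EuclideanSpace ℝ (Fin d)) = d := finrank_euclideanSpace_fin
  have sect_bound : ∀ θ : Metric.sphere (0 : EuclideanSpace ℝ (Fin d)) 1,
      (Measure.volumeIoiPow (Module.finrank ℝ (EuclideanSpace ℝ (Fin d)) - 1))
        (Prod.mk θ ⁻¹' S)
        ≤ ENNReal.ofReal ((2 ^ (d - 1) * ((r + δ) ^ d - r ^ d)) / d) := by
    intro θ
    obtain ⟨ρ1, ρ2, hρ1, hρ12, hsect, hkey⟩ :=
      section_exists hd hr hδ hKfin ⟨a0, ha0⟩ hKsub (θ : EuclideanSpace ℝ (Fin d))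
        (mem_sphere_zero_iff_norm.1 θ.2)
    have hsub : (Prod.mk θ ⁻¹' S) ⊆ (Subtype.val) ⁻¹' (Ioc ρ1 ρ2) := by
      rintro ⟨s, hs⟩ hmem
      obtain ⟨xx, hxT, hfx⟩ := hmem
      have hmem' : f.symm (θ, ⟨s, hs⟩) ∈ Tsub := by
        have hxeq : f.symm (θ, ⟨s, hs⟩) = xx := by rw [← hfx, f.symm_apply_apply]
        rw [hxeq]
        exact hxT
      have hcoe : ((f.symm (θ, ⟨s, hs⟩) : ({0}ᶜ : Set (EuclideanSpace ℝ (Fin d))))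
          : EuclideanSpace ℝ (Fin d)) = s • (θ : EuclideanSpace ℝ (Fin d)) := by
        simp [hf]
      have : s • (θ : EuclideanSpace ℝ (Fin d)) ∈ T := by
        have := hmem'
        rw [hTsubdef, mem_preimage, hcoe] at this
        exact this
      exact hsect s hs this
    have hd1 : ((d - 1 : ℕ) : ℝ) + 1 = (d : ℝ) := by
      have h1d : (1:ℕ) ≤ d := by omega
      push_cast [h1d]
      ring
    have m2 : (Measure.volumeIoiPow (Module.finrank ℝ (EuclideanSpace ℝ (Fin d)) - 1))
        ((Subtype.val) ⁻¹' (Ioc ρ1 ρ2)) = ENNReal.ofReal ((ρ2 ^ d - ρ1 ^ d) / d) := by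
      rw [hfr, volumeIoiPow_preimage_Ioc (d - 1) hρ1 hρ12,
        Nat.sub_add_cancel (by omega : 1 ≤ d), hd1]
    refine le_trans (measure_mono hsub) ?_
    rw [m2]
    apply ENNReal.ofReal_le_ofReal
    gcongr
  have hX : (0:ℝ) ≤ 2 ^ (d - 1) * ((r + δ) ^ d - r ^ d) := by
    have h1 : r ^ d ≤ (r + δ) ^ d := pow_le_pow_left₀ hr.le (by linarith) d
    have h2 : (0:ℝ) ≤ 2 ^ (d - 1) := by positivity
    nlinarith
  have hball : volume (Metric.ball (0 : EuclideanSpace ℝ (Fin d)) 1)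
      = ENNReal.ofReal (omegaVol d) := by
    rw [EuclideanSpace.volume_ball, omegaVol_eq]
    simp [Fintype.card_fin]
  calc volume T
      = ((volume : Measure (EuclideanSpace ℝ (Fin d))).toSphere.prod
          (Measure.volumeIoiPow (Module.finrank ℝ (EuclideanSpace ℝ (Fin d)) - 1))) S := by
        rw [step1, step2]
    _ = ∫⁻ θ, (Measure.volumeIoiPow (Module.finrank ℝ (EuclideanSpace ℝ (Fin d)) - 1))
          (Prod.mk θ ⁻¹' S) ∂ (volume : Measure (EuclideanSpace ℝ (Fin d))).toSphere :=
        Measure.prod_apply hSmeas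
    _ ≤ ∫⁻ _θ, ENNReal.ofReal ((2 ^ (d - 1) * ((r + δ) ^ d - r ^ d)) / d)
          ∂ (volume : Measure (EuclideanSpace ℝ (Fin d))).toSphere :=
        lintegral_mono sect_bound
    _ = ENNReal.ofReal ((2 ^ (d - 1) * ((r + δ) ^ d - r ^ d)) / d)
          * ((volume : Measure (EuclideanSpace ℝ (Fin d))).toSphere univ) :=
        lintegral_const _
    _ = ENNReal.ofReal ((2 ^ (d - 1) * ((r + δ) ^ d - r ^ d)) / d)
          * ((d : ℝ≥0∞) * ENNReal.ofReal (omegaVol d)) := by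
        rw [Measure.toSphere_apply_univ, hfr, hball]
    _ = ENNReal.ofReal (2 ^ (d - 1) * omegaVol d * ((r + δ) ^ d - r ^ d)) := by
        rw [← ENNReal.ofReal_natCast d,
          ← ENNReal.ofReal_mul (by positivity : (0:ℝ) ≤ (d:ℝ)),
          ← ENNReal.ofReal_mul (by positivity : (0:ℝ) ≤ (2 ^ (d - 1) * ((r + δ) ^ d - r ^ d)) / d)]
        congr 1
        have hdne : (d:ℝ) ≠ 0 := Nat.cast_ne_zero.2 (by omega)
        field_simp


/-- translated version -/
lemma cluster_bound' {d : ℕ} (hd : 2 ≤ d) {r δ : ℝ} (hr : 0 < r) (hδ : 0 < δ)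
    (p : EuclideanSpace ℝ (Fin d)) {K : Set (EuclideanSpace ℝ (Fin d))}
    (hKfin : K.Finite) (hKne : K.Nonempty) (hKsub : K ⊆ Metric.closedBall p r) :
    volume ((K + Metric.closedBall 0 (r + δ)) \ (K + Metric.closedBall 0 r)) ≤
      ENNReal.ofReal (2 ^ (d - 1) * omegaVol d * ((r + δ) ^ d - r ^ d)) := by
  set K' : Set (EuclideanSpace ℝ (Fin d)) := (-p) +ᵥ K with hK'def
  have hK'fin : K'.Finite := by
    rw [hK'def, ← Set.image_vadd]
    exact hKfin.image _
  have hK'ne : K'.Nonempty := hKne.vadd_set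
  have hK'sub : K' ⊆ Metric.closedBall 0 r := by
    rintro y ⟨a, haK, rfl⟩
    have := hKsub haK
    rw [Metric.mem_closedBall] at this ⊢
    simpa [dist_eq_norm, neg_add_eq_sub] using this
  have hset : ∀ t : ℝ, (K' + Metric.closedBall (0 : EuclideanSpace ℝ (Fin d)) t)
      = (-p) +ᵥ (K + Metric.closedBall (0 : EuclideanSpace ℝ (Fin d)) t) := by
    intro t
    ext y
    constructor
    · rintro ⟨a', ⟨a, haK, rfl⟩, b, hb, rfl⟩
      exact ⟨a + b, ⟨a, haK, b, hb, rfl⟩, by simp only [vadd_eq_add]; abel⟩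
    · rintro ⟨z, ⟨a, haK, b, hb, rfl⟩, rfl⟩
      exact ⟨-p +ᵥ a, ⟨a, haK, rfl⟩, b, hb, by simp only [vadd_eq_add]; abel⟩
  have hdiff : (K' + Metric.closedBall 0 (r + δ)) \ (K' + Metric.closedBall 0 r)
      = (-p) +ᵥ ((K + Metric.closedBall 0 (r + δ)) \ (K + Metric.closedBall 0 r)) := by
    rw [hset, hset]
    simp only [← Set.image_vadd]
    exact (Set.image_diff (add_right_injective (-p)) _ _).symm
  have := cluster_bound hd hr hδ hK'fin hK'ne hK'sub
  rwa [hdiff, measure_vadd] at this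

/-- For `d ≥ 2`, `r, δ > 0` and a nonempty finite set
`A = {x_1, …, x_N} ⊆ ℝ^d`,
`λ(A_{⊕(r+δ)} \ A_{⊕r}) ≤ N_B(A; r) · 2^{d−1} ω_d ((r+δ)^d − r^d)`,
where `N_B(A; r)` is the `r`-packing number of `A` in the `ℓ²` metric. -/
theorem volume_annulus_le_packing_ball
    (d : ℕ) (hd : 2 ≤ d) (r δ : ℝ) (hr : 0 < r) (hδ : 0 < δ) (N : ℕ) (hN : 1 ≤ N)
    (x : Fin N → EuclideanSpace ℝ (Fin d)) :
    volume ((Set.range x + (r + δ) • unitBall d) \ (Set.range x + r • unitBall d)) ≤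
      ENNReal.ofReal ((packingNum dist (Set.range x) r : ℝ) *
        (2 ^ (d - 1) * omegaVol d * ((r + δ) ^ d - r ^ d))) := by
  classical
  have hrδ : (0:ℝ) < r + δ := by linarith
  have hball : ∀ t : ℝ, 0 < t → t • unitBall d = Metric.closedBall (0 : EuclideanSpace ℝ (Fin d)) t := by
    intro t ht
    rw [unitBall, smul_closedBall _ _ zero_le_one, smul_zero, Real.norm_eq_abs,
      abs_of_pos ht, mul_one]
  rw [hball _ hrδ, hball _ hr]
  set A : Set (EuclideanSpace ℝ (Fin d)) := Set.range x with hAdef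
  have hAfin : A.Finite := Set.finite_range x
  set PS : Set ℕ := {n : ℕ | ∃ S : Finset (EuclideanSpace ℝ (Fin d)), ↑S ⊆ A ∧ S.card = n ∧
    ∀ u ∈ S, ∀ v ∈ S, u ≠ v → r < dist u v} with hPSdef
  have h0PS : 0 ∈ PS := ⟨∅, by simp⟩
  have hbddPS : BddAbove PS := by
    refine ⟨hAfin.toFinset.card, ?_⟩
    rintro n ⟨S, hS, hcard, -⟩
    rw [← hcard]
    exact Finset.card_le_card fun a ha => hAfin.mem_toFinset.2 (hS ha)
  have hmdef : packingNum dist A r = sSup PS := rfl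
  have hmmem : sSup PS ∈ PS := Nat.sSup_mem ⟨0, h0PS⟩ hbddPS
  obtain ⟨P, hPA, hPcard, hPsep⟩ := hmmem
  have hcover : ∀ a ∈ A, ∃ p ∈ P, dist a p ≤ r := by
    intro a ha
    by_contra hc
    push_neg at hc
    have haP : a ∉ P := by
      intro haP
      have := hc a haP
      simp at this
      linarith
    have hnew : P.card + 1 ∈ PS := by
      refine ⟨insert a P, ?_, ?_, ?_⟩
      · intro u hu
        rcases Finset.mem_insert.1 (by exact_mod_cast hu) with rfl | hu'
        · exact ha
        · exact hPA hu'
      · rw [Finset.card_insert_of_notMem haP]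
      · intro u hu v hv huv
        rcases Finset.mem_insert.1 hu with rfl | hu' <;>
          rcases Finset.mem_insert.1 hv with rfl | hv'
        · exact absurd rfl huv
        · exact hc v hv'
        · rw [dist_comm]; exact hc u hu'
        · exact hPsep u hu' v hv' huv
    have hle := le_csSup hbddPS hnew
    rw [hPcard] at hle
    omega
  -- clusters
  set Kp : EuclideanSpace ℝ (Fin d) → Set (EuclideanSpace ℝ (Fin d)) :=
    fun p => {a ∈ A | dist a p ≤ r} with hKpdef
  have hKpfin : ∀ p, (Kp p).Finite := fun p => hAfin.subset (sep_subset _ _)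
  have hKpsub : ∀ p, Kp p ⊆ Metric.closedBall p r := fun p a ha => Metric.mem_closedBall.2 ha.2
  have hKpne : ∀ p ∈ P, (Kp p).Nonempty := by
    intro p hp
    exact ⟨p, hPA hp, by simp [hr.le]⟩
  -- covering inclusion
  have hincl : (A + Metric.closedBall 0 (r + δ)) \ (A + Metric.closedBall 0 r)
      ⊆ ⋃ p ∈ P, ((Kp p + Metric.closedBall 0 (r + δ)) \ (Kp p + Metric.closedBall 0 r)) := by
    rintro y ⟨hin, hout⟩
    obtain ⟨a, haA, hay⟩ := mem_add_closedBall_iff.1 hin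
    obtain ⟨p, hpP, hap⟩ := hcover a haA
    refine mem_iUnion₂.2 ⟨p, hpP, ?_, ?_⟩
    · exact mem_add_closedBall_iff.2 ⟨a, ⟨haA, hap⟩, hay⟩
    · intro hy
      obtain ⟨a', ha', hy'⟩ := mem_add_closedBall_iff.1 hy
      exact hout (mem_add_closedBall_iff.2 ⟨a', ha'.1, hy'⟩)
  calc volume ((A + Metric.closedBall 0 (r + δ)) \ (A + Metric.closedBall 0 r))
      ≤ volume (⋃ p ∈ P, ((Kp p + Metric.closedBall 0 (r + δ)) \ (Kp p + Metric.closedBall 0 r))) :=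
        measure_mono hincl
    _ ≤ ∑ p ∈ P, volume ((Kp p + Metric.closedBall 0 (r + δ)) \ (Kp p + Metric.closedBall 0 r)) :=
        measure_biUnion_finset_le P _
    _ ≤ ∑ _p ∈ P, ENNReal.ofReal (2 ^ (d - 1) * omegaVol d * ((r + δ) ^ d - r ^ d)) := by
        apply Finset.sum_le_sum
        intro p hp
        exact cluster_bound' hd hr hδ p (hKpfin p) (hKpne p hp) (hKpsub p)
    _ = (P.card : ℝ≥0∞) * ENNReal.ofReal (2 ^ (d - 1) * omegaVol d * ((r + δ) ^ d - r ^ d)) := by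
        rw [Finset.sum_const, nsmul_eq_mul]
    _ = ENNReal.ofReal ((packingNum dist A r : ℝ) *
          (2 ^ (d - 1) * omegaVol d * ((r + δ) ^ d - r ^ d))) := by
        rw [hPcard, ← hmdef, ← ENNReal.ofReal_natCast (packingNum dist A r),
          ← ENNReal.ofReal_mul (Nat.cast_nonneg _)]
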